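/- Let L be a finite atomistic lattice. Then L is isomorphic to the lattice of flats of some boolean representable finite simplicial complex if and only if L is isomorphic to the lattice of flats of the simplicial complex 𝒯_L = (At(L), T_L). -/

import Mathlib

universe u v

/-- `F ⊆ V` is a flat of the simplicial complex `(V, H)`: for every `I ∈ H` with
`I ⊆ F` and every `p ∈ V \ F`, `I ∪ {p} ∈ H`. -/
def IsCFlat {α : Type u} (V : Set α) (H : Set (Set α)) (F : Set α) : Prop :=
  F ⊆ V ∧ ∀ I ∈ H, I ⊆ F → ∀ p ∈ V \ F, insert p I ∈ H

/-- `(V, H)` is a finite simplicial complex: `V` is finite and nonempty, and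
`H ⊆ 2^V` is nonempty and closed under taking subsets. -/
def IsCpx {α : Type u} (V : Set α) (H : Set (Set α)) : Prop :=
  V.Finite ∧ V.Nonempty ∧ H.Nonempty ∧ (∀ X ∈ H, X ⊆ V) ∧ ∀ X ∈ H, ∀ Y ⊆ X, Y ∈ H

/-- `X` is a transversal of the successive differences for some chain
`F 0 ⊂ F 1 ⊂ … ⊂ F k` of flats of `(V, H)`: `X` admits an enumeration
`x 0, …, x (k-1)` with `x i ∈ F (i+1) \ F i`. -/
def TransvSD {α : Type u} (V : Set α) (H : Set (Set α)) (X : Set α) : Prop :=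
  ∃ (k : ℕ) (F : Fin (k + 1) → Set α) (x : Fin k → α),
    (∀ i, IsCFlat V H (F i)) ∧ StrictMono F ∧
    Function.Injective x ∧ X = Set.range x ∧
    ∀ i : Fin k, x i ∈ F i.succ \ F i.castSucc

/-- `(V, H)` is boolean representable: every `X ∈ H` is a transversal of the
successive differences for some chain of flats of `(V, H)`. -/
def BoolRep {α : Type u} (V : Set α) (H : Set (Set α)) : Prop :=
  ∀ X ∈ H, TransvSD V H X

/-- `xξ` : the set of atoms of `L` lying below `x`. -/
def latxi (L : Type u) [Lattice L] [OrderBot L] (x : L) : Set L :=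
  {a | IsAtom a ∧ a ≤ x}

/-- `T_L` : the set of transversals of chains in `L`, i.e. sets of atoms `A`
admitting an enumeration `e 0, …, e (m-1)` and a chain `c 0 < … < c m` in `L`
with `e i ∈ (c (i+1))ξ \ (c i)ξ`. -/
def TLat (L : Type u) [Lattice L] [OrderBot L] : Set (Set L) :=
  {A | ∃ (m : ℕ) (c : Fin (m + 1) → L) (e : Fin m → L), StrictMono c ∧
      Function.Injective e ∧ A = Set.range e ∧
      ∀ i : Fin m, e i ∈ latxi L (c i.succ) \ latxi L (c i.castSucc)}

/-- A lattice is atomistic if every element is a join of atoms. -/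
def AtomisticLat (L : Type u) [Lattice L] [OrderBot L] : Prop :=
  ∀ x : L, ∃ s : Finset L, (∀ a ∈ s, IsAtom a) ∧ x = s.sup id

set_option linter.unusedSectionVars false
set_option maxHeartbeats 1000000

namespace Stmt12Aux

lemma range_snoc {n : ℕ} {β : Type v} (f : Fin n → β) (a : β) :
    Set.range (Fin.snoc f a : Fin (n+1) → β) = insert a (Set.range f) := by
  ext b
  constructor
  · rintro ⟨i, rfl⟩
    refine Fin.lastCases ?_ (fun j => ?_) i
    · left; rw [Fin.snoc_last]
    · right; rw [Fin.snoc_castSucc]; exact ⟨j, rfl⟩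
  · rintro (rfl | ⟨j, rfl⟩)
    · exact ⟨Fin.last n, Fin.snoc_last _ _⟩
    · exact ⟨j.castSucc, Fin.snoc_castSucc _ _ _⟩

variable {L : Type u} [Lattice L] [Fintype L] [OrderBot L]

lemma exists_atom_le_not_le (hA : AtomisticLat L) {x y : L} (h : ¬ y ≤ x) :
    ∃ a : L, IsAtom a ∧ a ≤ y ∧ ¬ a ≤ x := by
  obtain ⟨s, hs, hsup⟩ := hA y
  by_contra hall
  push_neg at hall
  apply h
  rw [hsup]
  exact Finset.sup_le fun a ha => hall a (hs a ha) (hsup ▸ Finset.le_sup (f := id) ha)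

lemma latxi_mono {x y : L} (h : x ≤ y) : latxi L x ⊆ latxi L y :=
  fun a ⟨ha, hax⟩ => ⟨ha, hax.trans h⟩

lemma le_of_latxi_subset (hA : AtomisticLat L) {x y : L} (h : latxi L x ⊆ latxi L y) :
    x ≤ y := by
  by_contra hxy
  obtain ⟨a, ha, hax, hay⟩ := exists_atom_le_not_le hA hxy
  exact hay (h ⟨ha, hax⟩).2

lemma latxi_ssubset (hA : AtomisticLat L) {x y : L} (h : x < y) :
    latxi L x ⊂ latxi L y := by
  refine ⟨latxi_mono h.le, fun hsub => ?_⟩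
  exact absurd (le_of_latxi_subset hA hsub) (not_le_of_gt h)

lemma empty_mem_TLat : (∅ : Set L) ∈ TLat L := by
  refine ⟨0, fun _ => ⊥, Fin.elim0, ?_, ?_, ?_, ?_⟩
  · intro i j hij
    exact absurd hij (by simp [Fin.lt_def, Nat.lt_one_iff.mp i.isLt, Nat.lt_one_iff.mp j.isLt])
  · intro i; exact i.elim0
  · rw [Set.range_eq_empty]
  · intro i; exact i.elim0

lemma TLat_atoms {A : Set L} (hA : A ∈ TLat L) {a : L} (ha : a ∈ A) : IsAtom a := by
  obtain ⟨m, c, e, _, _, rfl, hcross⟩ := hA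
  obtain ⟨i, rfl⟩ := ha
  exact (hcross i).1.1

lemma TLat_erase {m : ℕ} (c : Fin (m + 2) → L) (e : Fin (m + 1) → L)
    (hc : StrictMono c) (he : Function.Injective e)
    (hcross : ∀ i : Fin (m+1), e i ∈ latxi L (c i.succ) \ latxi L (c i.castSucc))
    (i₀ : Fin (m + 1)) :
    ∃ (c' : Fin (m + 1) → L) (e' : Fin m → L), StrictMono c' ∧ Function.Injective e' ∧
      Set.range e' = Set.range e \ {e i₀} ∧
      ∀ i : Fin m, e' i ∈ latxi L (c' i.succ) \ latxi L (c' i.castSucc) := by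
  refine ⟨c ∘ (i₀.castSucc).succAbove, e ∘ i₀.succAbove,
    hc.comp (Fin.strictMono_succAbove _), he.comp (Fin.succAbove_right_injective), ?_, ?_⟩
  · rw [Set.range_comp, Fin.range_succAbove, ← Set.image_univ (f := e),
      show ({i₀}ᶜ : Set (Fin (m+1))) = Set.univ \ {i₀} by simp [Set.compl_eq_univ_diff],
      Set.image_diff he, Set.image_univ, Set.image_singleton]
  · intro i
    simp only [Function.comp_apply]
    by_cases hlt : i.castSucc < i₀
    · rw [Fin.succAbove_of_castSucc_lt _ _ hlt]
      have hup := (hcross i.castSucc).1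
      have hlo := (hcross i.castSucc).2
      constructor
      · by_cases h2 : i.succ.castSucc < i₀.castSucc
        · rw [Fin.succAbove_of_castSucc_lt _ _ h2, ← Fin.succ_castSucc]
          exact hup
        · rw [Fin.succAbove_of_le_castSucc _ _ (not_lt.mp h2)]
          refine latxi_mono (hc.monotone ?_) hup
          rw [Fin.succ_castSucc]
          exact (Fin.castSucc_le_succ _)
      · rw [Fin.succAbove_of_castSucc_lt _ _ (by simpa using hlt)]
        exact hlo
    · rw [Fin.succAbove_of_le_castSucc _ _ (not_lt.mp hlt)]
      have hup := (hcross i.succ).1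
      have hlo := (hcross i.succ).2
      have hle : i₀.castSucc ≤ i.succ.castSucc := by
        exact Fin.castSucc_le_castSucc_iff.mpr ((not_lt.mp hlt).trans (Fin.castSucc_le_succ i : i.castSucc ≤ i.succ))
      constructor
      · rw [Fin.succAbove_of_le_castSucc _ _ hle]
        exact hup
      · rw [Fin.succAbove_of_le_castSucc _ _ (by simpa using not_lt.mp hlt), Fin.succ_castSucc]
        exact hlo

lemma TLat_subset : ∀ {m : ℕ} (c : Fin (m + 1) → L) (e : Fin m → L),
    StrictMono c → Function.Injective e →
    (∀ i : Fin m, e i ∈ latxi L (c i.succ) \ latxi L (c i.castSucc)) →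
    ∀ Y : Set L, Y ⊆ Set.range e → Y ∈ TLat L := by
  intro m
  induction m with
  | zero =>
    intro c e _ _ _ Y hY
    have : Y = ∅ := by
      rw [Set.range_eq_empty] at hY
      exact Set.subset_eq_empty hY rfl
    rw [this]; exact empty_mem_TLat
  | succ m ih =>
    intro c e hc he hcross Y hY
    by_cases hall : ∀ i, e i ∈ Y
    · have : Y = Set.range e := by
        apply Set.Subset.antisymm hY
        rintro _ ⟨i, rfl⟩; exact hall i
      exact ⟨m + 1, c, e, hc, he, this, hcross⟩
    · push_neg at hall
      obtain ⟨i₀, hi₀⟩ := hall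
      obtain ⟨c', e', hc', he', hrange, hcross'⟩ := TLat_erase c e hc he hcross i₀
      refine ih c' e' hc' he' hcross' Y ?_
      rw [hrange]
      intro y hy
      exact ⟨hY hy, by rintro rfl; exact hi₀ hy⟩

lemma flat_latxi (x : L) : IsCFlat {a : L | IsAtom a} (TLat L) (latxi L x) := by
  constructor
  · intro a ha; exact ha.1
  · rintro I hI hIx p ⟨hpa, hpx⟩
    have hpnx : ¬ p ≤ x := fun h => hpx ⟨hpa, h⟩
    obtain ⟨m, c, e, hc, he, rfl, hcross⟩ := hI
    refine ⟨m + 1, Fin.snoc (fun i => c i ⊓ x) ((c (Fin.last m) ⊓ x) ⊔ p),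
      Fin.snoc e p, ?_, ?_, ?_, ?_⟩
    · rw [Fin.strictMono_iff_lt_succ]
      intro i
      refine Fin.lastCases ?_ (fun j => ?_) i
      · rw [Fin.succ_last, Fin.snoc_last, Fin.snoc_castSucc]
        exact left_lt_sup.mpr fun h => hpnx (h.trans inf_le_right)
      · rw [Fin.succ_castSucc, Fin.snoc_castSucc, Fin.snoc_castSucc]
        have hej := hcross j
        have hejx : e j ≤ x := (hIx ⟨j, rfl⟩).2
        refine lt_of_le_of_ne (inf_le_inf_right x (hc.monotone (Fin.castSucc_le_succ j))) ?_
        intro heq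
        apply hcross j |>.2
        refine ⟨hej.1.1, ?_⟩
        have : e j ≤ c j.succ ⊓ x := le_inf hej.1.2 hejx
        rw [← heq] at this
        exact this.trans inf_le_left
    · have hpI : p ∉ Set.range e := fun ⟨j, hj⟩ => hpx (hj ▸ (hIx ⟨j, rfl⟩))
      intro i j h
      rcases Fin.eq_castSucc_or_eq_last i with ⟨i', rfl⟩ | rfl <;>
        rcases Fin.eq_castSucc_or_eq_last j with ⟨j', rfl⟩ | rfl
      · rw [Fin.snoc_castSucc, Fin.snoc_castSucc] at h
        exact congrArg Fin.castSucc (he h)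
      · rw [Fin.snoc_castSucc, Fin.snoc_last] at h
        exact absurd ⟨i', h⟩ hpI
      · rw [Fin.snoc_last, Fin.snoc_castSucc] at h
        exact absurd ⟨j', h.symm⟩ hpI
      · rfl
    · rw [range_snoc]
    · intro i
      refine Fin.lastCases ?_ (fun j => ?_) i
      · rw [Fin.succ_last]
        simp only [Fin.snoc_last, Fin.snoc_castSucc]
        constructor
        · exact ⟨hpa, le_sup_right⟩
        · exact fun h => hpnx (h.2.trans inf_le_right)
      · rw [Fin.succ_castSucc]
        simp only [Fin.snoc_castSucc]
        constructor
        · exact ⟨(hcross j).1.1, le_inf (hcross j).1.2 (hIx ⟨j, rfl⟩).2⟩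
        · exact fun h => (hcross j).2 ⟨h.1, h.2.trans inf_le_left⟩

lemma boolrep_TLat (hA : AtomisticLat L) : BoolRep {a : L | IsAtom a} (TLat L) := by
  rintro X ⟨m, c, e, hc, he, rfl, hcross⟩
  refine ⟨m, fun i => latxi L (c i), e, fun i => flat_latxi (c i), ?_, he, rfl,
    fun i => hcross i⟩
  intro i j hij
  show latxi L (c i) ⊂ latxi L (c j)
  exact latxi_ssubset hA (hc hij)

lemma iscpx_TLat (ha : ∃ a : L, IsAtom a) : IsCpx {a : L | IsAtom a} (TLat L) := by
  refine ⟨Set.toFinite _, ha, ⟨∅, empty_mem_TLat⟩, ?_, ?_⟩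
  · intro X hX a haX; exact TLat_atoms hX haX
  · rintro X ⟨m, c, e, hc, he, rfl, hcross⟩ Y hY
    exact TLat_subset c e hc he hcross Y hY

lemma nonempty_flatIso (hA : AtomisticLat L)
    (hsurj : ∀ F : Set L, IsCFlat {a : L | IsAtom a} (TLat L) F → ∃ x : L, F = latxi L x) :
    Nonempty (L ≃o {F : Set L // IsCFlat {a : L | IsAtom a} (TLat L) F}) := by
  have hinj : Function.Injective (fun x : L => (⟨latxi L x, flat_latxi x⟩ :
      {F : Set L // IsCFlat {a : L | IsAtom a} (TLat L) F})) := by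
    intro x y hxy
    have h := congrArg Subtype.val hxy
    simp only at h
    exact le_antisymm (le_of_latxi_subset hA (h ▸ subset_rfl))
      (le_of_latxi_subset hA (h ▸ subset_rfl))
  have hsur : Function.Surjective (fun x : L => (⟨latxi L x, flat_latxi x⟩ :
      {F : Set L // IsCFlat {a : L | IsAtom a} (TLat L) F})) := by
    rintro ⟨F, hF⟩
    obtain ⟨x, rfl⟩ := hsurj F hF
    exact ⟨x, rfl⟩
  refine ⟨{ Equiv.ofBijective _ ⟨hinj, hsur⟩ with map_rel_iff' := ?_ }⟩
  intro a b
  show (⟨latxi L a, _⟩ : {F : Set L // _}) ≤ ⟨latxi L b, _⟩ ↔ a ≤ b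
  rw [Subtype.mk_le_mk]
  exact ⟨fun h => le_of_latxi_subset hA h, fun h => latxi_mono h⟩

lemma trivial_backward (htriv : ∀ x : L, x = ⊥) :
    ∃ (α : Type u) (V : Set α) (H : Set (Set α)), IsCpx V H ∧ BoolRep V H ∧
      Nonempty (L ≃o {F : Set α // IsCFlat V H F}) := by
  have hVflat : IsCFlat ({⊥} : Set L) ({∅} : Set (Set L)) {⊥} :=
    ⟨subset_rfl, fun I hI hIF p hp => absurd hp (by simp)⟩
  have hflat_eq : ∀ F : Set L, IsCFlat ({⊥} : Set L) ({∅} : Set (Set L)) F → F = {⊥} := by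
    intro F hF
    rcases Set.subset_singleton_iff_eq.mp hF.1 with rfl | rfl
    · exfalso
      have := hF.2 ∅ rfl (Set.empty_subset _) ⊥ (by simp)
      simp only [Set.mem_singleton_iff] at this
      have h2 : (⊥:L) ∈ insert (⊥:L) (∅ : Set L) := Set.mem_insert _ _
      rw [Set.mem_singleton_iff.mp this] at h2
      exact Set.notMem_empty _ h2
    · rfl
  refine ⟨L, {⊥}, {∅}, ⟨Set.finite_singleton _, ⟨⊥, rfl⟩, ⟨∅, rfl⟩, ?_, ?_⟩, ?_, ?_⟩
  · rintro X rfl; exact Set.empty_subset _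
  · rintro X rfl Y hY
    simpa using Set.subset_eq_empty hY rfl
  · rintro X rfl
    refine ⟨0, fun _ => {⊥}, Fin.elim0, fun _ => hVflat, ?_, fun i => i.elim0, ?_, fun i => i.elim0⟩
    · intro i j hij
      exact absurd hij (by simp [Fin.lt_def, Nat.lt_one_iff.mp i.isLt, Nat.lt_one_iff.mp j.isLt])
    · rw [Set.range_eq_empty]
  · refine ⟨⟨⟨fun _ => ⟨({⊥} : Set L), hVflat⟩, fun _ => ⊥,
      fun x => (htriv x).symm, fun F => Subtype.ext (hflat_eq F.1 F.2).symm⟩, ?_⟩⟩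
    intro a b
    show (⟨({⊥} : Set L), hVflat⟩ : {F : Set L // _}) ≤ ⟨({⊥} : Set L), hVflat⟩ ↔ a ≤ b
    simp only [le_refl, true_iff]
    rw [htriv a, htriv b]


section Forward

variable {α : Type u} {V : Set α} {H : Set (Set α)}

lemma empty_mem_cpx (hC : IsCpx V H) : ∅ ∈ H := by
  obtain ⟨X, hX⟩ := hC.2.2.1
  exact hC.2.2.2.2 X hX ∅ (Set.empty_subset X)

lemma flat_inter {F G : Set α} (hF : IsCFlat V H F) (hG : IsCFlat V H G) :
    IsCFlat V H (F ∩ G) := by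
  refine ⟨fun a ha => hF.1 ha.1, ?_⟩
  intro I hI hIFG p hp
  by_cases hpF : p ∈ F
  · have hpG : p ∉ G := fun h => hp.2 ⟨hpF, h⟩
    exact hG.2 I hI (hIFG.trans Set.inter_subset_right) p ⟨hp.1, hpG⟩
  · exact hF.2 I hI (hIFG.trans Set.inter_subset_left) p ⟨hp.1, hpF⟩

lemma flat_V : IsCFlat V H V :=
  ⟨subset_rfl, fun I hI hIV p hp => absurd hp.1 hp.2⟩

variable (φ : L ≃o {F : Set α // IsCFlat V H F})

def Xf (φ : L ≃o {F : Set α // IsCFlat V H F}) (x : L) : Set α := (φ x).val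

lemma Xf_flat (x : L) : IsCFlat V H (Xf φ x) := (φ x).2

lemma Xf_subset_V (x : L) : Xf φ x ⊆ V := (φ x).2.1

lemma Xf_subset_iff {x y : L} : Xf φ x ⊆ Xf φ y ↔ x ≤ y := by
  rw [← φ.le_iff_le]
  exact Iff.rfl

lemma Xf_mono {x y : L} (h : x ≤ y) : Xf φ x ⊆ Xf φ y := (Xf_subset_iff φ).mpr h

lemma Xf_surj (F : Set α) (hF : IsCFlat V H F) : ∃ x : L, Xf φ x = F :=
  ⟨φ.symm ⟨F, hF⟩, congrArg Subtype.val (φ.apply_symm_apply ⟨F, hF⟩)⟩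

lemma Xf_inf (x y : L) : Xf φ (x ⊓ y) = Xf φ x ∩ Xf φ y := by
  obtain ⟨z, hz⟩ := Xf_surj φ (Xf φ x ∩ Xf φ y) (flat_inter (Xf_flat φ x) (Xf_flat φ y))
  have hzx : z ≤ x := (Xf_subset_iff φ).mp (hz ▸ Set.inter_subset_left)
  have hzy : z ≤ y := (Xf_subset_iff φ).mp (hz ▸ Set.inter_subset_right)
  have h1 : Xf φ z ⊆ Xf φ (x ⊓ y) := Xf_mono φ (le_inf hzx hzy)
  have h2 : Xf φ (x ⊓ y) ⊆ Xf φ x ∩ Xf φ y :=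
    Set.subset_inter (Xf_mono φ inf_le_left) (Xf_mono φ inf_le_right)
  exact Set.Subset.antisymm (hz ▸ h2) (hz ▸ h1 : Xf φ x ∩ Xf φ y ⊆ _)

lemma exists_least {P : L → Prop}
    (hinf : ∀ x y : L, P x → P y → P (x ⊓ y)) (hne : ∃ x : L, P x) :
    ∃ m : L, P m ∧ ∀ x : L, P x → m ≤ x := by
  classical
  obtain ⟨x0, hx0⟩ := hne
  obtain ⟨m, hm, hmin⟩ := Finset.exists_minimal (s := (Finset.univ : Finset L).filter P)
    ⟨x0, Finset.mem_filter.mpr ⟨Finset.mem_univ _, hx0⟩⟩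
  have hPm := (Finset.mem_filter.mp hm).2
  refine ⟨m, hPm, fun x hx => ?_⟩
  have h2 : P (m ⊓ x) := hinf _ _ hPm hx
  have h3 : ¬ (m ⊓ x < m) := fun hlt => hlt.not_ge (hmin (Finset.mem_filter.mpr ⟨Finset.mem_univ _, h2⟩) hlt.le)
  have h4 : m ⊓ x = m := by
    rcases lt_or_eq_of_le (inf_le_left : m ⊓ x ≤ m) with h | h
    · exact absurd h h3
    · exact h
  rw [← h4]
  exact inf_le_right

lemma exists_cl {v : α} (hv : v ∈ V) : ∃ m : L, ∀ x : L, v ∈ Xf φ x ↔ m ≤ x := by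
  obtain ⟨m, hm, hmin⟩ := exists_least (P := fun x : L => v ∈ Xf φ x)
    (fun x y hx hy => by show v ∈ Xf φ (x ⊓ y); rw [Xf_inf]; exact ⟨hx, hy⟩)
    ⟨φ.symm ⟨V, flat_V⟩, by
      show v ∈ Xf φ _
      rw [show Xf φ (φ.symm ⟨V, flat_V⟩) = V from
        congrArg Subtype.val (φ.apply_symm_apply ⟨V, flat_V⟩)]
      exact hv⟩
  exact ⟨m, fun x => ⟨fun hvx => hmin x hvx, fun hle => Xf_mono φ hle hm⟩⟩

noncomputable def clf (φ : L ≃o {F : Set α // IsCFlat V H F}) : α → L :=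
  fun v => @dite _ (v ∈ V) (Classical.dec _)
    (fun hv => Classical.choose (exists_cl φ hv)) (fun _ => ⊥)

lemma clf_spec {v : α} (hv : v ∈ V) : ∀ x : L, v ∈ Xf φ x ↔ clf φ v ≤ x := by
  have he : clf φ v = Classical.choose (exists_cl φ hv) := by
    unfold clf
    exact dif_pos hv
  rw [he]
  exact Classical.choose_spec (exists_cl φ hv)

lemma range_eq_insert_last {k : ℕ} {β : Type v} (y : Fin (k+1) → β) :
    Set.range y = insert (y (Fin.last k)) (Set.range (y ∘ Fin.castSucc)) := by
  ext b
  constructor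
  · rintro ⟨i, rfl⟩
    refine Fin.lastCases ?_ (fun j => ?_) i
    · exact Or.inl rfl
    · exact Or.inr ⟨j, rfl⟩
  · rintro (rfl | ⟨j, rfl⟩)
    · exact ⟨Fin.last k, rfl⟩
    · exact ⟨j.castSucc, rfl⟩

lemma chain_transversal_mem (hC : IsCpx V H) :
    ∀ {k : ℕ} (c : Fin (k+1) → L) (y : Fin k → α), Monotone c →
    (∀ i : Fin k, y i ∈ Xf φ (c i.succ) \ Xf φ (c i.castSucc)) →
    Set.range y ∈ H := by
  intro k
  induction k with
  | zero =>
    intro c y _ _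
    rw [Set.range_eq_empty]
    exact empty_mem_cpx hC
  | succ k ih =>
    intro c y hmono hcr
    have hIH : Set.range (y ∘ Fin.castSucc) ∈ H := by
      refine ih (c ∘ Fin.castSucc) (y ∘ Fin.castSucc)
        (hmono.comp (Fin.strictMono_castSucc.monotone)) ?_
      intro i
      simp only [Function.comp_apply]
      constructor
      · have := (hcr i.castSucc).1
        refine Set.mem_of_mem_of_subset this (Xf_mono φ (hmono ?_))
        rw [Fin.succ_castSucc]
      · have := (hcr i.castSucc).2
        intro hmem
        exact this hmem
    have hsub : Set.range (y ∘ Fin.castSucc) ⊆ Xf φ (c (Fin.last k).castSucc) := by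
      rintro _ ⟨i, rfl⟩
      simp only [Function.comp_apply]
      refine Set.mem_of_mem_of_subset (hcr i.castSucc).1 (Xf_mono φ (hmono ?_))
      rw [Fin.succ_castSucc]
      exact Fin.castSucc_le_castSucc_iff.mpr (Fin.le_last _)
    have hlast := hcr (Fin.last k)
    have hmem : insert (y (Fin.last k)) (Set.range (y ∘ Fin.castSucc)) ∈ H := by
      refine (Xf_flat φ (c (Fin.last k).castSucc)).2 _ hIH hsub _ ⟨?_, hlast.2⟩
      exact Xf_subset_V φ _ hlast.1
    rw [range_eq_insert_last y]
    exact hmem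

lemma exists_point {a : L} (ha : IsAtom a) : ∃ q, q ∈ V ∧ clf φ q = a := by
  have hlt : Xf φ ⊥ ⊂ Xf φ a := by
    rw [Set.ssubset_iff_subset_ne]
    refine ⟨Xf_mono φ bot_le, fun h => ?_⟩
    have := φ.injective (Subtype.ext h)
    exact ha.1 this.symm
  obtain ⟨q, hq, hqn⟩ := Set.exists_of_ssubset hlt
  have hqV : q ∈ V := Xf_subset_V φ a hq
  refine ⟨q, hqV, ?_⟩
  have h1 : clf φ q ≤ a := (clf_spec φ hqV a).mp hq
  rcases (ha.le_iff).mp h1 with h | h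
  · exact absurd ((clf_spec φ hqV ⊥).mpr h.le) hqn
  · exact h

lemma mem_H_chain (hB : BoolRep V H) {I : Set α} (hI : I ∈ H) :
    ∃ (k : ℕ) (z : Fin (k+1) → L) (y : Fin k → α), StrictMono z ∧ Function.Injective y ∧
      I = Set.range y ∧ ∀ i : Fin k, y i ∈ Xf φ (z i.succ) \ Xf φ (z i.castSucc) := by
  obtain ⟨k, F, y, hFl, hFm, hyinj, hIr, hcr⟩ := hB I hI
  refine ⟨k, fun i => φ.symm ⟨F i, hFl i⟩, y, ?_, hyinj, hIr, ?_⟩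
  · intro i j hij
    exact φ.symm.strictMono (Subtype.mk_lt_mk.mpr (hFm hij))
  · intro i
    have h1 : Xf φ (φ.symm ⟨F i.succ, hFl i.succ⟩) = F i.succ :=
      congrArg Subtype.val (φ.apply_symm_apply _)
    have h2 : Xf φ (φ.symm ⟨F i.castSucc, hFl i.castSucc⟩) = F i.castSucc :=
      congrArg Subtype.val (φ.apply_symm_apply _)
    show y i ∈ Xf φ _ \ Xf φ _
    rw [h1, h2]
    exact hcr i

lemma H_mem_not_bot (hB : BoolRep V H) {I : Set α} (hI : I ∈ H) {w : α} (hw : w ∈ I) :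
    w ∉ Xf φ ⊥ := by
  obtain ⟨k, z, y, hz, hyinj, rfl, hcr⟩ := mem_H_chain φ hB hI
  obtain ⟨i, rfl⟩ := hw
  exact fun h => (hcr i).2 (Xf_mono φ bot_le h)

lemma H_cl_inj (hB : BoolRep V H) {k : ℕ} {z : Fin (k+1) → L} {y : Fin k → α}
    (hz : StrictMono z)
    (hcr : ∀ i : Fin k, y i ∈ Xf φ (z i.succ) \ Xf φ (z i.castSucc)) :
    ∀ i j : Fin k, i < j → ∀ x : L, y i ∈ Xf φ x → y j ∈ Xf φ x → x ≤ z j.castSucc → False := by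
  intro i j hij x hxi hxj hle
  exact (hcr j).2 (Xf_mono φ hle hxj)


lemma range_fin2 {β : Type v} (f : Fin 2 → β) : Set.range f = {f 0, f 1} := by
  ext b
  constructor
  · rintro ⟨i, rfl⟩
    fin_cases i
    · exact Or.inl rfl
    · exact Or.inr rfl
  · rintro (rfl | rfl)
    · exact ⟨0, rfl⟩
    · exact ⟨1, rfl⟩

lemma cl_atom_or_bot (hC : IsCpx V H) (hB : BoolRep V H) (hA : AtomisticLat L)
    {v : α} (hv : v ∈ V) : clf φ v = ⊥ ∨ IsAtom (clf φ v) := by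
  by_contra hcon
  push_neg at hcon
  obtain ⟨hne_bot, hnatom⟩ := hcon
  have hUflat : IsCFlat V H (Xf φ ⊥ ∪ {w ∈ V | clf φ w = clf φ v}) := by
    constructor
    · rintro w (hw | hw)
      · exact Xf_subset_V φ ⊥ hw
      · exact hw.1
    · intro I hI hIU p hp
      have hpV : p ∈ V := hp.1
      have hpnb : p ∉ Xf φ ⊥ := fun h => hp.2 (Or.inl h)
      have hpt : clf φ p ≠ clf φ v := fun h => hp.2 (Or.inr ⟨hpV, h⟩)
      have hsub : I.Subsingleton := by
        intro w hw w' hw'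
        by_contra hne
        have hclw : clf φ w = clf φ v := by
          rcases hIU hw with h | h
          · exact absurd h (H_mem_not_bot φ hB hI hw)
          · exact h.2
        have hclw' : clf φ w' = clf φ v := by
          rcases hIU hw' with h | h
          · exact absurd h (H_mem_not_bot φ hB hI hw')
          · exact h.2
        obtain ⟨k, z, y, hz, hyinj, hIr, hcr⟩ := mem_H_chain φ hB hI
        have key : ∀ i j : Fin k, i < j → clf φ (y i) = clf φ v →
            clf φ (y j) = clf φ v → False := by
          intro i j hij hci hcj
          have hyiV : y i ∈ V := Xf_subset_V φ _ (hcr i).1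
          have hyjV : y j ∈ V := Xf_subset_V φ _ (hcr j).1
          have h1 : clf φ (y i) ≤ z i.succ := (clf_spec φ hyiV _).mp (hcr i).1
          have h2 : clf φ (y j) ≤ z j.castSucc := by
            rw [hcj, ← hci]
            exact h1.trans (hz.monotone (Fin.succ_le_castSucc_iff.mpr hij))
          exact (hcr j).2 ((clf_spec φ hyjV _).mpr h2)
        rw [hIr] at hw hw'
        obtain ⟨i, rfl⟩ := hw
        obtain ⟨j, rfl⟩ := hw'
        rcases lt_trichotomy i j with h | h | h
        · exact key i j h hclw hclw'
        · exact hne (congrArg y h)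
        · exact key j i h hclw' hclw
      rcases hsub.eq_empty_or_singleton with rfl | ⟨w, rfl⟩
      · have hr : Set.range (fun _ : Fin 1 => p) ∈ H := by
          refine chain_transversal_mem φ hC ![⊥, clf φ p] (fun _ => p) ?_ ?_
          · rw [Fin.monotone_iff_le_succ]
            intro i
            fin_cases i
            simp only [Fin.castSucc_zero, Fin.succ_zero_eq_one, Matrix.cons_val_zero,
              Matrix.cons_val_one, Matrix.head_cons]
            exact bot_le
          · intro i
            fin_cases i
            simp only [Fin.castSucc_zero, Fin.succ_zero_eq_one, Matrix.cons_val_zero,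
              Matrix.cons_val_one, Matrix.head_cons]
            exact ⟨(clf_spec φ hpV _).mpr le_rfl, hpnb⟩
        rw [Set.range_const] at hr
        have he : insert p (∅ : Set α) = {p} := by simp
        rw [he]
        exact hr
      · have hwI : w ∈ ({w} : Set α) := rfl
        have hwH : ({w} : Set α) ∈ H := hI
        have hclw : clf φ w = clf φ v := by
          rcases hIU hwI with h | h
          · exact absurd h (H_mem_not_bot φ hB hI hwI)
          · exact h.2
        have hwV : w ∈ V := by
          rcases hIU hwI with h | h
          · exact Xf_subset_V φ ⊥ h
          · exact h.1
        have hwnb : w ∉ Xf φ ⊥ := H_mem_not_bot φ hB hI hwI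
        by_cases hle : clf φ p ≤ clf φ v
        · have hlt : ¬ clf φ v ≤ clf φ p := fun h => hpt (le_antisymm hle h)
          have hr : Set.range ![p, w] ∈ H := by
            refine chain_transversal_mem φ hC ![⊥, clf φ p, clf φ v] ![p, w] ?_ ?_
            · rw [Fin.monotone_iff_le_succ]
              intro i
              fin_cases i
              · simp only [Fin.castSucc_zero, Fin.succ_zero_eq_one, Matrix.cons_val_zero,
                  Matrix.cons_val_one, Matrix.head_cons]
                exact bot_le
              · simp only [Matrix.cons_val_one, Matrix.head_cons]
                show (![⊥, clf φ p, clf φ v] : Fin 3 → L) _ ≤ (![⊥, clf φ p, clf φ v] : Fin 3 → L) _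
                norm_num [Matrix.cons_val_one, Matrix.head_cons]
                exact hle
            · intro i
              fin_cases i
              · refine ⟨?_, ?_⟩
                · show p ∈ Xf φ (![⊥, clf φ p, clf φ v] (0 : Fin 2).succ)
                  norm_num [Matrix.cons_val_one, Matrix.head_cons]
                  exact (clf_spec φ hpV _).mpr le_rfl
                · show p ∉ Xf φ (![⊥, clf φ p, clf φ v] (0 : Fin 2).castSucc)
                  norm_num
                  exact hpnb
              · refine ⟨?_, ?_⟩
                · show w ∈ Xf φ (![⊥, clf φ p, clf φ v] (1 : Fin 2).succ)
                  norm_num [Matrix.cons_val_one, Matrix.head_cons]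
                  exact (clf_spec φ hwV _).mpr hclw.le
                · show w ∉ Xf φ (![⊥, clf φ p, clf φ v] (1 : Fin 2).castSucc)
                  norm_num [Matrix.cons_val_one, Matrix.head_cons]
                  intro hmem
                  exact hlt (hclw ▸ (clf_spec φ hwV _).mp hmem)
          rw [range_fin2] at hr
          simp only [Matrix.cons_val_zero, Matrix.cons_val_one, Matrix.head_cons] at hr
          have he : insert p ({w} : Set α) = {p, w} := rfl
          rw [he]
          exact hr
        · have hr : Set.range ![w, p] ∈ H := by
            refine chain_transversal_mem φ hC ![⊥, clf φ v, clf φ v ⊔ clf φ p] ![w, p] ?_ ?_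
            · rw [Fin.monotone_iff_le_succ]
              intro i
              fin_cases i
              · simp only [Fin.castSucc_zero, Fin.succ_zero_eq_one, Matrix.cons_val_zero,
                  Matrix.cons_val_one, Matrix.head_cons]
                exact bot_le
              · show (![⊥, clf φ v, clf φ v ⊔ clf φ p] : Fin 3 → L) _ ≤
                  (![⊥, clf φ v, clf φ v ⊔ clf φ p] : Fin 3 → L) _
                norm_num [Matrix.cons_val_one, Matrix.head_cons]
                exact (le_sup_left : clf φ v ≤ clf φ v ⊔ clf φ p)
            · intro i
              fin_cases i
              · refine ⟨?_, ?_⟩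
                · show w ∈ Xf φ (![⊥, clf φ v, clf φ v ⊔ clf φ p] (0 : Fin 2).succ)
                  norm_num [Matrix.cons_val_one, Matrix.head_cons]
                  exact (clf_spec φ hwV _).mpr hclw.le
                · show w ∉ Xf φ (![⊥, clf φ v, clf φ v ⊔ clf φ p] (0 : Fin 2).castSucc)
                  norm_num
                  exact hwnb
              · refine ⟨?_, ?_⟩
                · show p ∈ Xf φ (![⊥, clf φ v, clf φ v ⊔ clf φ p] (1 : Fin 2).succ)
                  norm_num [Matrix.cons_val_one, Matrix.head_cons]
                  exact (clf_spec φ hpV _).mpr le_sup_right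
                · show p ∉ Xf φ (![⊥, clf φ v, clf φ v ⊔ clf φ p] (1 : Fin 2).castSucc)
                  norm_num [Matrix.cons_val_one, Matrix.head_cons]
                  intro hmem
                  exact hle ((clf_spec φ hpV _).mp hmem)
          rw [range_fin2] at hr
          simp only [Matrix.cons_val_zero, Matrix.cons_val_one, Matrix.head_cons] at hr
          have he : insert p ({w} : Set α) = {w, p} := Set.pair_comm p w
          rw [he]
          exact hr
  obtain ⟨x₀, hx₀⟩ := Xf_surj φ _ hUflat
  have hvmem : v ∈ Xf φ x₀ := by
    rw [hx₀]
    exact Or.inr ⟨hv, rfl⟩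
  have htx : clf φ v ≤ x₀ := (clf_spec φ hv _).mp hvmem
  obtain ⟨a, haat, hat, _⟩ := exists_atom_le_not_le hA (x := ⊥) (y := clf φ v)
    (fun h => hne_bot (le_bot_iff.mp h))
  have hav : a ≠ clf φ v := fun h => hnatom (h ▸ haat)
  obtain ⟨q, hqV, hqa⟩ := exists_point φ haat
  have hq0 : q ∈ Xf φ x₀ := (clf_spec φ hqV _).mpr (by rw [hqa]; exact hat.trans htx)
  rw [hx₀] at hq0
  rcases hq0 with h | h
  · have : clf φ q ≤ ⊥ := (clf_spec φ hqV ⊥).mp h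
    rw [hqa] at this
    exact haat.1 (le_bot_iff.mp this)
  · apply hav
    rw [← hqa]
    exact h.2


include φ in
lemma flats_TLat_shaped (hC : IsCpx V H) (hB : BoolRep V H) (hA : AtomisticLat L)
    {F : Set L} (hF : IsCFlat {a : L | IsAtom a} (TLat L) F) :
    ∃ x₀ : L, F = latxi L x₀ := by
  classical
  have hGflat : IsCFlat V H (Xf φ ⊥ ∪ {w ∈ V | clf φ w ∈ F}) := by
    constructor
    · rintro w (hw | hw)
      · exact Xf_subset_V φ ⊥ hw
      · exact hw.1
    · intro I hI hIG p hp
      have hpV : p ∈ V := hp.1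
      have hpnb : p ∉ Xf φ ⊥ := fun h => hp.2 (Or.inl h)
      have hpF : clf φ p ∉ F := fun h => hp.2 (Or.inr ⟨hpV, h⟩)
      have hpbot : clf φ p ≠ ⊥ := fun h => hpnb ((clf_spec φ hpV ⊥).mpr h.le)
      have hpatom : IsAtom (clf φ p) := (cl_atom_or_bot φ hC hB hA hpV).resolve_left hpbot
      obtain ⟨k, z, y, hzm, hyinj, rfl, hcr⟩ := mem_H_chain φ hB hI
      have hyV : ∀ i, y i ∈ V := fun i => Xf_subset_V φ _ (hcr i).1
      have hynb : ∀ i, y i ∉ Xf φ ⊥ := fun i h => (hcr i).2 (Xf_mono φ bot_le h)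
      have hclF : ∀ i, clf φ (y i) ∈ F := by
        intro i
        rcases hIG ⟨i, rfl⟩ with h | h
        · exact absurd h (hynb i)
        · exact h.2
      have hclbot : ∀ i, clf φ (y i) ≠ ⊥ :=
        fun i h => (hynb i) ((clf_spec φ (hyV i) ⊥).mpr h.le)
      have hclatom : ∀ i, IsAtom (clf φ (y i)) :=
        fun i => (cl_atom_or_bot φ hC hB hA (hyV i)).resolve_left (hclbot i)
      have hle1 : ∀ i, clf φ (y i) ≤ z i.succ := fun i => (clf_spec φ (hyV i) _).mp (hcr i).1
      have hnle : ∀ i, ¬ clf φ (y i) ≤ z i.castSucc :=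
        fun i h => (hcr i).2 ((clf_spec φ (hyV i) _).mpr h)
      have hainj : Function.Injective (fun i => clf φ (y i)) := by
        intro i j hij
        by_contra hne
        have key : ∀ i j : Fin k, i < j → clf φ (y i) = clf φ (y j) → False := by
          intro i j hlt heq2
          apply hnle j
          rw [← heq2]
          exact (hle1 i).trans (hzm.monotone (Fin.succ_le_castSucc_iff.mpr hlt))
        rcases lt_trichotomy i j with h | h | h
        · exact key i j h hij
        · exact hne h
        · exact key j i h hij.symm
      have hATL : Set.range (fun i => clf φ (y i)) ∈ TLat L :=
        ⟨k, z, _, hzm, hainj, rfl, fun i => ⟨⟨hclatom i, hle1 i⟩, fun h => hnle i h.2⟩⟩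
      have hsubF : Set.range (fun i => clf φ (y i)) ⊆ F := by
        rintro _ ⟨i, rfl⟩; exact hclF i
      obtain ⟨m', c, e, hc, he, heq, hcr'⟩ := hF.2 _ hATL hsubF (clf φ p) ⟨hpatom, hpF⟩
      have hei : ∀ i : Fin m', e i = clf φ p ∨ ∃ j, clf φ (y j) = e i := by
        intro i
        have hmem : e i ∈ insert (clf φ p) (Set.range fun i => clf φ (y i)) := by
          rw [heq]; exact ⟨i, rfl⟩
        rcases hmem with h | ⟨j, hj⟩
        · exact Or.inl h
        · exact Or.inr ⟨j, hj⟩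
      set w : Fin m' → α := fun i =>
        if h : e i = clf φ p then p
        else y (Classical.choose ((hei i).resolve_left h)) with hwdef
      have hclw : ∀ i, clf φ (w i) = e i := by
        intro i
        simp only [hwdef]
        by_cases h : e i = clf φ p
        · rw [dif_pos h]; exact h.symm
        · rw [dif_neg h]; exact Classical.choose_spec ((hei i).resolve_left h)
      have hwV : ∀ i, w i ∈ V := by
        intro i
        simp only [hwdef]
        by_cases h : e i = clf φ p
        · rw [dif_pos h]; exact hpV
        · rw [dif_neg h]; exact hyV _
      have hrw : Set.range w ∈ H := by
        refine chain_transversal_mem φ hC c w hc.monotone ?_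
        intro i
        have h1 := (hcr' i).1
        have h2 := (hcr' i).2
        constructor
        · exact (clf_spec φ (hwV i) _).mpr (hclw i ▸ h1.2)
        · intro hmem
          exact h2 ⟨h1.1, hclw i ▸ (clf_spec φ (hwV i) _).mp hmem⟩
      have hrange : Set.range w = insert p (Set.range y) := by
        apply Set.Subset.antisymm
        · rintro _ ⟨i, rfl⟩
          simp only [hwdef]
          by_cases h : e i = clf φ p
          · rw [dif_pos h]; exact Or.inl rfl
          · rw [dif_neg h]; exact Or.inr ⟨_, rfl⟩
        · rintro b (rfl | ⟨j, rfl⟩)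
          · have hmem : clf φ b ∈ Set.range e := by
              rw [← heq]; exact Or.inl rfl
            obtain ⟨i, hi⟩ := hmem
            refine ⟨i, ?_⟩
            simp only [hwdef]
            rw [dif_pos hi]
          · have hmem : clf φ (y j) ∈ Set.range e := by
              rw [← heq]; exact Or.inr ⟨j, rfl⟩
            obtain ⟨i, hi⟩ := hmem
            refine ⟨i, ?_⟩
            simp only [hwdef]
            have h : ¬ e i = clf φ p := by
              rw [hi]
              intro hh
              exact hpF (hh ▸ hclF j)
            rw [dif_neg h]
            have hspec := Classical.choose_spec ((hei i).resolve_left h)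
            congr 1
            exact hainj (hspec.trans hi)
      rw [hrange] at hrw
      exact hrw
  obtain ⟨x₀, hx₀⟩ := Xf_surj φ _ hGflat
  refine ⟨x₀, ?_⟩
  ext a
  constructor
  · intro haF
    have haat : IsAtom a := hF.1 haF
    obtain ⟨q, hqV, hqa⟩ := exists_point φ haat
    have hq : q ∈ Xf φ x₀ := by
      rw [hx₀]
      exact Or.inr ⟨hqV, hqa.symm ▸ haF⟩
    exact ⟨haat, hqa ▸ (clf_spec φ hqV _).mp hq⟩
  · rintro ⟨haat, hax⟩
    obtain ⟨q, hqV, hqa⟩ := exists_point φ haat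
    have hq : q ∈ Xf φ x₀ := (clf_spec φ hqV _).mpr (by rw [hqa]; exact hax)
    rw [hx₀] at hq
    rcases hq with h | h
    · exact absurd (le_bot_iff.mp (by rw [← hqa]; exact (clf_spec φ hqV ⊥).mp h)) haat.1
    · rw [← hqa]; exact h.2

lemma forward_dir (hA : AtomisticLat L) (hC : IsCpx V H) (hB : BoolRep V H)
    (φ : L ≃o {F : Set α // IsCFlat V H F}) :
    Nonempty (L ≃o {F : Set L // IsCFlat {a : L | IsAtom a} (TLat L) F}) :=
  nonempty_flatIso hA fun F hF => flats_TLat_shaped φ hC hB hA hF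

end Forward

end Stmt12Aux

/-- A finite atomistic lattice `L` is isomorphic to the lattice of flats of some
boolean representable finite simplicial complex if and only if `L` is isomorphic
to the lattice of flats of `𝒯_L = (At(L), T_L)`. -/
theorem stmt12 (L : Type u) [Lattice L] [Fintype L] [OrderBot L]
    (hA : AtomisticLat L) :
    (∃ (α : Type u) (V : Set α) (H : Set (Set α)), IsCpx V H ∧ BoolRep V H ∧
        Nonempty (L ≃o {F : Set α // IsCFlat V H F})) ↔
    Nonempty (L ≃o {F : Set L // IsCFlat {a : L | IsAtom a} (TLat L) F}) := by
  constructor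
  · rintro ⟨α, V, H, hC, hB, ⟨φ⟩⟩
    exact Stmt12Aux.forward_dir hA hC hB φ
  · rintro ⟨ψ⟩
    by_cases htriv : ∀ x : L, x = ⊥
    · exact Stmt12Aux.trivial_backward htriv
    · push_neg at htriv
      obtain ⟨x, hx⟩ := htriv
      obtain ⟨a, haat, -, -⟩ := Stmt12Aux.exists_atom_le_not_le hA (x := ⊥) (y := x)
        (fun h => hx (le_bot_iff.mp h))
      exact ⟨L, {a | IsAtom a}, TLat L, Stmt12Aux.iscpx_TLat ⟨a, haat⟩,
        Stmt12Aux.boolrep_TLat hA, ⟨ψ⟩⟩
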